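/- Let p > 1 be a real number, let μ ∈ ℝ with 0 ≤ μ ≤ 1, and let v ∈ ℝ with v ≥ (√p − 1)²/2. Set λ_μ := p^μ + p^{1−μ} − p − 1 (real powers). Then every nonzero r ∈ ℂ satisfying r + r⁻¹ − 2 = 2λ_μ/v has |r| = 1. -/

import Mathlib

set_option maxHeartbeats 1000000 in

/-- Unit interval locus: for `p > 1`, `μ ∈ [0,1]`, `v ≥ (√p - 1)²/2`, every nonzero
complex solution of the mode equation `r + r⁻¹ - 2 = 2λ_μ/v` has modulus one. -/
theorem stmt_4 (p : ℝ) (hp : 1 < p) (μ : ℝ) (hμ0 : 0 ≤ μ) (hμ1 : μ ≤ 1)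
    (v : ℝ) (hv : (Real.sqrt p - 1) ^ 2 / 2 ≤ v)
    (r : ℂ) (hr : r ≠ 0)
    (heq : r + r⁻¹ - 2 = 2 * ((p ^ μ + p ^ (1 - μ) - p - 1 : ℝ) : ℂ) / (v : ℂ)) :
    ‖r‖ = 1 := by
  have hp0 : (0:ℝ) < p := by linarith
  set lam : ℝ := p ^ μ + p ^ (1 - μ) - p - 1 with hlam
  -- basic facts about rpow
  have ha : (1:ℝ) ≤ p ^ μ := by
    have := Real.rpow_le_rpow_of_exponent_le hp.le hμ0
    simpa using this
  have hb : (1:ℝ) ≤ p ^ (1 - μ) := by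
    have := Real.rpow_le_rpow_of_exponent_le hp.le (by linarith : (0:ℝ) ≤ 1 - μ)
    simpa using this
  have hab : p ^ μ * p ^ (1 - μ) = p := by
    rw [← Real.rpow_add hp0]; simp
  have hupper : p ^ μ + p ^ (1 - μ) ≤ p + 1 := by
    nlinarith [mul_nonneg (sub_nonneg.mpr ha) (sub_nonneg.mpr hb)]
  have hs1 : Real.sqrt (p ^ μ) * Real.sqrt (p ^ (1 - μ)) = Real.sqrt p := by
    rw [← Real.sqrt_mul (by positivity), hab]
  have hsa : Real.sqrt (p ^ μ) ^ 2 = p ^ μ := Real.sq_sqrt (by positivity)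
  have hsb : Real.sqrt (p ^ (1 - μ)) ^ 2 = p ^ (1 - μ) := Real.sq_sqrt (by positivity)
  have hlower : 2 * Real.sqrt p ≤ p ^ μ + p ^ (1 - μ) := by
    nlinarith [sq_nonneg (Real.sqrt (p ^ μ) - Real.sqrt (p ^ (1 - μ)))]
  have hsp : Real.sqrt p ^ 2 = p := Real.sq_sqrt hp0.le
  have hsp1 : 1 < Real.sqrt p := by
    nlinarith [Real.sqrt_nonneg p]
  have hv0 : (0:ℝ) < v := by nlinarith
  set c : ℝ := 2 * lam / v with hc
  have hclam : lam ≤ 0 := by nlinarith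
  have hc0 : c ≤ 0 := by
    rw [hc, div_nonpos_iff]; right; constructor <;> linarith
  have hc4 : -4 ≤ c := by
    rw [hc, le_div_iff₀ hv0]
    nlinarith
  clear_value c lam
  -- complex algebra
  set t : ℂ := ((c + 2 : ℝ) : ℂ) with ht
  have h1 : r + r⁻¹ = t := by
    rw [ht, hc]
    push_cast
    rw [mul_div_assoc] at heq ⊢
    linear_combination heq
  have key : r ^ 2 + 1 = t * r := by
    have h2 := congrArg (· * r) h1
    field_simp at h2
    linear_combination h2
  have keyc : (starRingEnd ℂ) r ^ 2 + 1 = t * (starRingEnd ℂ) r := by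
    have := congrArg (starRingEnd ℂ) key
    simpa [map_add, map_mul, map_pow, map_ofNat, ht, Complex.conj_ofReal] using this
  by_cases hcr : (starRingEnd ℂ) r = r
  · -- real case
    obtain ⟨x, rfl⟩ := Complex.conj_eq_iff_real.mp hcr
    rw [ht] at key
    have hx : x ^ 2 + 1 = (c + 2) * x := by exact_mod_cast key
    have habs : |(c + 2) * x| ≤ 2 * |x| := by
      rw [abs_mul]
      apply mul_le_mul_of_nonneg_right ?_ (abs_nonneg x)
      rw [abs_le]; constructor <;> linarith
    have h2 : (|x| - 1) ^ 2 ≤ 0 := by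
      nlinarith [sq_abs x, le_abs_self ((c + 2) * x), habs]
    have h3 : |x| = 1 := by nlinarith [sq_nonneg (|x| - 1)]
    simpa using h3
  · -- nonreal case
    have hd : r - (starRingEnd ℂ) r ≠ 0 := sub_ne_zero.mpr (Ne.symm hcr)
    have hsum : (r - (starRingEnd ℂ) r) * (r + (starRingEnd ℂ) r) =
        (r - (starRingEnd ℂ) r) * t := by
      linear_combination key - keyc
    have hsum' : r + (starRingEnd ℂ) r = t := mul_left_cancel₀ hd hsum
    have hprod : r * (starRingEnd ℂ) r = 1 := by
      linear_combination r * hsum' - key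
    have hns : (Complex.normSq r : ℂ) = 1 := by
      rw [← Complex.mul_conj]; exact hprod
    have hns' : Complex.normSq r = 1 := by exact_mod_cast hns
    rw [Complex.norm_def, hns', Real.sqrt_one]
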